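/- Let X be a metric space, (g_k) a sequence of isometries of X converging (uniformly on bounded sets) to an isometry g, and (x_k) a sequence in X with x_k ∈ Min(g_k) for all k. Then every accumulation point of (x_k) lies in Min(g). In particular, if x_k → x then d(x, gx) = ℓ(g) and ℓ(g_k) → ℓ(g). -/

import Mathlib

open Filter

/-- The minimal set of a map `h` of a metric space:
points realizing the translation length `ℓ(h) = inf_y d(y, hy)`. -/
def MinSet {X : Type*} [MetricSpace X] (h : X → X) : Set X :=
  {p : X | dist p (h p) = ⨅ y : X, dist y (h y)}

/-- If isometries `g k` converge uniformly on bounded sets to an isometry `G` and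
`x k ∈ Min(g k)` for all `k`, then every accumulation point of `(x k)` lies in
`Min(G)`; in particular if `x k → p` then `d(p, Gp) = ℓ(G)` and `ℓ(g k) → ℓ(G)`. -/
theorem stmt2 {X : Type*} [MetricSpace X] [Nonempty X]
    (g : ℕ → X → X) (hg : ∀ k, Isometry (g k)) (G : X → X) (hG : Isometry G)
    (hconv : ∀ s : Set X, Bornology.IsBounded s →
      TendstoUniformlyOn (fun k => g k) G atTop s)
    (x : ℕ → X) (hx : ∀ k, x k ∈ MinSet (g k)) :
    (∀ p : X, MapClusterPt p atTop x → p ∈ MinSet G) ∧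
    (∀ p : X, Tendsto x atTop (nhds p) →
      dist p (G p) = (⨅ y : X, dist y (G y)) ∧
      Tendsto (fun k => ⨅ y : X, dist y (g k y)) atTop (nhds (⨅ y : X, dist y (G y)))) := by
  -- pointwise convergence
  have hpt : ∀ y : X, Tendsto (fun k => g k y) atTop (nhds (G y)) := fun y =>
    (hconv {y} Bornology.isBounded_singleton).tendsto_at (Set.mem_singleton y)
  have hbdd : ∀ h : X → X, BddBelow (Set.range fun y => dist y (h y)) :=
    fun h => ⟨0, by rintro _ ⟨y, rfl⟩; exact dist_nonneg⟩
  have hle : ∀ k (y : X), (⨅ z : X, dist z (g k z)) ≤ dist y (g k y) :=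
    fun k y => ciInf_le (hbdd _) y
  have hGle : ∀ y : X, (⨅ z : X, dist z (G z)) ≤ dist y (G y) := fun y => ciInf_le (hbdd _) y
  have main : ∀ p : X, MapClusterPt p atTop x → p ∈ MinSet G := by
    intro p hp
    have key : ∀ y : X, dist p (G p) ≤ dist y (G y) := by
      intro y
      refine le_of_forall_pos_le_add fun ε hε => ?_
      have h1 : ∀ᶠ k in atTop, dist (g k p) (G p) < ε / 4 := by
        have := (hpt p).eventually (Metric.ball_mem_nhds (G p) (by positivity : (0:ℝ) < ε/4))
        simpa [Metric.mem_ball] using this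
      have hdy : Tendsto (fun k => dist y (g k y)) atTop (nhds (dist y (G y))) :=
        tendsto_const_nhds.dist (hpt y)
      have h2 : ∀ᶠ k in atTop, dist y (g k y) < dist y (G y) + ε / 4 :=
        hdy.eventually_lt_const (by linarith)
      have hfreq : ∃ᶠ k in atTop, dist (x k) p < ε / 4 := by
        have := mapClusterPt_iff_frequently.mp hp _ (Metric.ball_mem_nhds p (by positivity : (0:ℝ) < ε/4))
        simpa [Metric.mem_ball] using this
      obtain ⟨k, hk0, hk1, hk2⟩ := (hfreq.and_eventually (h1.and h2)).exists
      have hmin : dist (x k) (g k (x k)) = ⨅ z : X, dist z (g k z) := hx k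
      have hiso : dist (g k (x k)) (g k p) = dist (x k) p := (hg k).dist_eq _ _
      have t1 : dist p (G p) ≤ dist p (x k) + dist (x k) (g k (x k)) +
          dist (g k (x k)) (g k p) + dist (g k p) (G p) := by
        calc dist p (G p) ≤ dist p (g k p) + dist (g k p) (G p) := dist_triangle _ _ _
          _ ≤ (dist p (g k (x k)) + dist (g k (x k)) (g k p)) + dist (g k p) (G p) := by
              gcongr; exact dist_triangle _ _ _
          _ ≤ ((dist p (x k) + dist (x k) (g k (x k))) + dist (g k (x k)) (g k p))
              + dist (g k p) (G p) := by gcongr; exact dist_triangle _ _ _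
          _ = _ := by ring
      have t2 : dist (x k) (g k (x k)) ≤ dist y (g k y) := hmin ▸ hle k y
      have hc : dist p (x k) = dist (x k) p := dist_comm _ _
      linarith [t1, t2, hk0, hk1, hk2, hc, hiso]
    exact le_antisymm (le_ciInf key) (hGle p)
  refine ⟨main, fun p hp => ?_⟩
  have hcl : p ∈ MinSet G := main p (hp.mapClusterPt)
  refine ⟨hcl, ?_⟩
  -- g k (x k) → G p
  have hgx : Tendsto (fun k => g k (x k)) atTop (nhds (G p)) := by
    rw [tendsto_iff_dist_tendsto_zero]
    refine squeeze_zero (g := fun k => dist (x k) p + dist (g k p) (G p))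
      (fun k => dist_nonneg) (fun k => ?_) ?_
    · exact (dist_triangle (g k (x k)) (g k p) (G p)).trans
        (by rw [(hg k).dist_eq])
    · have h1 : Tendsto (fun k => dist (x k) p) atTop (nhds 0) :=
        tendsto_iff_dist_tendsto_zero.mp hp
      have h2 : Tendsto (fun k => dist (g k p) (G p)) atTop (nhds 0) :=
        tendsto_iff_dist_tendsto_zero.mp (hpt p)
      simpa using h1.add h2
  have : Tendsto (fun k => dist (x k) (g k (x k))) atTop (nhds (dist p (G p))) :=
    hp.dist hgx
  have heq : (fun k => ⨅ y : X, dist y (g k y)) = fun k => dist (x k) (g k (x k)) := by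
    funext k; exact (hx k).symm
  rw [heq]
  rwa [hcl] at this
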